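/- Let S be a nonempty finite multiset of positive integers with n = |S| ≥ 4, m = max(S), all multiplicities equal to one, and suppose for all a < b < c in S that (m−a) ≥ (m−b) + (m−c) + n − 3. Then S contains no four distinct elements a < b, c < d with a + d = b + c. Consequently, any finite poset whose multiset of maximal chain cardinalities equals S has no splitting element. -/
import Mathlib


open scoped Classical in
/-- The finite set of maximal chains of a finite poset, as finsets. -/
noncomputable def maxChains (α : Type*) [Fintype α] [PartialOrder α] : Finset (Finset α) :=
  Finset.univ.filter (fun s : Finset α => IsMaxChain (· ≤ ·) (s : Set α))

/-- The multiset of cardinalities of the maximal chains of a finite poset. -/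
noncomputable def mcMultiset (α : Type*) [Fintype α] [PartialOrder α] : Multiset ℕ :=
  (maxChains α).val.map Finset.card

/-- `x` is a splitting element: the suborder of elements `≤ x` has more than one
maximal chain and the suborder of elements `≥ x` has more than one maximal chain. -/
def IsSplitting {α : Type*} [PartialOrder α] (x : α) : Prop :=
  (∃ C₁ C₂ : Set (Set.Iic x), IsMaxChain (· ≤ ·) C₁ ∧ IsMaxChain (· ≤ ·) C₂ ∧ C₁ ≠ C₂) ∧
  (∃ C₁ C₂ : Set (Set.Ici x), IsMaxChain (· ≤ ·) C₁ ∧ IsMaxChain (· ≤ ·) C₂ ∧ C₁ ≠ C₂)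

section Glue

variable {α : Type} [PartialOrder α] {x : α}

/-- The glued set of a maximal chain below `x` and a maximal chain above `x`. -/
def glueSet (C : Set (Set.Iic x)) (D : Set (Set.Ici x)) : Set α :=
  (Subtype.val '' C) ∪ (Subtype.val '' D)

lemma mem_glue_left {C : Set (Set.Iic x)} {D : Set (Set.Ici x)}
    (hD : (⊥ : Set.Ici x) ∈ D) (hxC : (⊤ : Set.Iic x) ∈ C) (z : Set.Iic x) :
    z ∈ C ↔ (z : α) ∈ glueSet C D := by
  constructor
  · intro hz; exact Or.inl ⟨z, hz, rfl⟩
  · rintro (⟨w, hw, hwz⟩ | ⟨w, hw, hwz⟩)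
    · rwa [Subtype.val_injective hwz] at hw
    · have h1 : x ≤ (z : α) := hwz ▸ w.2
      have h2 : (z : α) ≤ x := z.2
      have : z = (⊤ : Set.Iic x) := Subtype.ext (le_antisymm h2 h1)
      rw [this]; exact hxC

lemma mem_glue_right {C : Set (Set.Iic x)} {D : Set (Set.Ici x)}
    (hxC : (⊤ : Set.Iic x) ∈ C) (hD : (⊥ : Set.Ici x) ∈ D) (z : Set.Ici x) :
    z ∈ D ↔ (z : α) ∈ glueSet C D := by
  constructor
  · intro hz; exact Or.inr ⟨z, hz, rfl⟩
  · rintro (⟨w, hw, hwz⟩ | ⟨w, hw, hwz⟩)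
    · have h1 : (z : α) ≤ x := hwz ▸ w.2
      have h2 : x ≤ (z : α) := z.2
      have : z = (⊥ : Set.Ici x) := Subtype.ext (le_antisymm h1 h2)
      rw [this]; exact hD
    · rwa [Subtype.val_injective hwz] at hw

lemma glue_isMaxChain {C : Set (Set.Iic x)} {D : Set (Set.Ici x)}
    (hC : IsMaxChain (· ≤ ·) C) (hD : IsMaxChain (· ≤ ·) D) :
    IsMaxChain (· ≤ ·) (glueSet C D) := by
  have hxC : (⊤ : Set.Iic x) ∈ C := hC.top_mem
  have hxD : (⊥ : Set.Ici x) ∈ D := hD.bot_mem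
  constructor
  · rintro a (⟨a', ha', rfl⟩ | ⟨a', ha', rfl⟩) b (⟨b', hb', rfl⟩ | ⟨b', hb', rfl⟩) hne
    · rcases hC.1 ha' hb' (fun h => hne (by rw [h])) with h | h
      · exact Or.inl h
      · exact Or.inr h
    · exact Or.inl (le_trans a'.2 b'.2)
    · exact Or.inr (le_trans b'.2 a'.2)
    · rcases hD.1 ha' hb' (fun h => hne (by rw [h])) with h | h
      · exact Or.inl h
      · exact Or.inr h
  · intro t ht hsub
    refine Set.Subset.antisymm hsub fun y hy => ?_
    have hxt : x ∈ t := hsub (Or.inl ⟨⊤, hxC, rfl⟩)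
    by_cases hyx : y = x
    · rw [hyx]; exact Or.inl ⟨⊤, hxC, rfl⟩
    rcases ht hy hxt hyx with h | h
    · -- y ≤ x
      have hch : IsChain (· ≤ ·) (insert (⟨y, h⟩ : Set.Iic x) C) := by
        refine hC.1.insert fun b hb hne => ?_
        have hbt : (b : α) ∈ t := hsub (Or.inl ⟨b, hb, rfl⟩)
        have hyb : y ≠ (b : α) := fun he => hne (Subtype.ext he)
        rcases ht hy hbt hyb with h' | h'
        · exact Or.inl h'
        · exact Or.inr h'
      have := hC.2 hch (Set.subset_insert _ _)
      exact Or.inl ⟨⟨y, h⟩, this ▸ Set.mem_insert _ _, rfl⟩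
    · have hch : IsChain (· ≤ ·) (insert (⟨y, h⟩ : Set.Ici x) D) := by
        refine hD.1.insert fun b hb hne => ?_
        have hbt : (b : α) ∈ t := hsub (Or.inr ⟨b, hb, rfl⟩)
        have hyb : y ≠ (b : α) := fun he => hne (Subtype.ext he)
        rcases ht hy hbt hyb with h' | h'
        · exact Or.inl h'
        · exact Or.inr h'
      have := hD.2 hch (Set.subset_insert _ _)
      exact Or.inr ⟨⟨y, h⟩, this ▸ Set.mem_insert _ _, rfl⟩

lemma glue_ncard [Fintype α] {C : Set (Set.Iic x)} {D : Set (Set.Ici x)}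
    (hC : (⊤ : Set.Iic x) ∈ C) (hD : (⊥ : Set.Ici x) ∈ D) :
    (glueSet C D).ncard + 1 = C.ncard + D.ncard := by
  have hinter : (Subtype.val '' C) ∩ (Subtype.val '' D) = {x} := by
    ext y
    constructor
    · rintro ⟨⟨a, ha, rfl⟩, ⟨b, hb, hba⟩⟩
      exact le_antisymm a.2 (hba ▸ b.2)
    · rintro rfl
      exact ⟨⟨⊤, hC, rfl⟩, ⟨⊥, hD, rfl⟩⟩
  have := Set.ncard_union_add_ncard_inter (Subtype.val '' C) (Subtype.val '' D)
    (Set.toFinite _) (Set.toFinite _)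
  rw [hinter, Set.ncard_singleton] at this
  rw [glueSet, this, Set.ncard_image_of_injective _ Subtype.val_injective,
    Set.ncard_image_of_injective _ Subtype.val_injective]

lemma glue_ncard_mem [Fintype α] {E : Set α} (hE : IsMaxChain (· ≤ ·) E) :
    E.ncard ∈ mcMultiset α := by
  classical
  have hfin : E.Finite := Set.toFinite E
  have hmem : hfin.toFinset ∈ maxChains α := by
    rw [maxChains, Finset.mem_filter]
    refine ⟨Finset.mem_univ _, ?_⟩
    rwa [Set.Finite.coe_toFinset]
  rw [Set.ncard_eq_toFinset_card E hfin]
  exact Multiset.mem_map_of_mem Finset.card hmem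

end Glue

theorem sparse_no_splitting (S : Multiset ℕ) (hnd : S.Nodup) (hpos : ∀ x ∈ S, 0 < x)
    (hn : 4 ≤ Multiset.card S) (m : ℕ) (hm : m ∈ S) (hmax : ∀ x ∈ S, x ≤ m)
    (hsparse : ∀ a ∈ S, ∀ b ∈ S, ∀ c ∈ S, a < b → b < c →
      (m - b) + (m - c) + Multiset.card S - 3 ≤ m - a) :
    (¬ ∃ a b c d, a ∈ S ∧ b ∈ S ∧ c ∈ S ∧ d ∈ S ∧
        a < b ∧ a < c ∧ b < d ∧ c < d ∧ b ≠ c ∧ a + d = b + c) ∧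
    (∀ (α : Type) (i1 : Fintype α) (i2 : PartialOrder α),
      @mcMultiset α i1 i2 = S → ∀ x : α, ¬ @IsSplitting α i2 x) := by
  have part1 : ¬ ∃ a b c d, a ∈ S ∧ b ∈ S ∧ c ∈ S ∧ d ∈ S ∧
      a < b ∧ a < c ∧ b < d ∧ c < d ∧ b ≠ c ∧ a + d = b + c := by
    rintro ⟨a, b, c, d, ha, hb, hc, hd, hab, hac, hbd, hcd, hbc, heq⟩
    have ham := hmax a ha
    have hbm := hmax b hb
    have hcm := hmax c hc
    have hdm := hmax d hd
    rcases lt_or_gt_of_ne hbc with h | h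
    · have := hsparse a ha b hb c hc hab h
      omega
    · have := hsparse a ha c hc b hb hac h
      omega
  refine ⟨part1, ?_⟩
  intro α i1 i2 hS x hx
  obtain ⟨⟨C₁, C₂, hC₁, hC₂, hCne⟩, ⟨D₁, D₂, hD₁, hD₂, hDne⟩⟩ := hx
  classical
  -- injectivity of cardinalities of maximal chains
  have hinj : ∀ E F : Set α, IsMaxChain (· ≤ ·) E → IsMaxChain (· ≤ ·) F →
      E.ncard = F.ncard → E = F := by
    intro E F hE hF hcard
    have hEf : E.Finite := Set.toFinite E
    have hFf : F.Finite := Set.toFinite F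
    have hEm : hEf.toFinset ∈ (maxChains α).val := by
      rw [Finset.mem_val, maxChains, Finset.mem_filter]
      exact ⟨Finset.mem_univ _, by rwa [Set.Finite.coe_toFinset]⟩
    have hFm : hFf.toFinset ∈ (maxChains α).val := by
      rw [Finset.mem_val, maxChains, Finset.mem_filter]
      exact ⟨Finset.mem_univ _, by rwa [Set.Finite.coe_toFinset]⟩
    have hndS : (mcMultiset α).Nodup := hS ▸ hnd
    have := Multiset.inj_on_of_nodup_map (f := Finset.card)
      (s := (maxChains α).val) hndS hEf.toFinset hEm hFf.toFinset hFm
      (by rw [← Set.ncard_eq_toFinset_card E hEf, ← Set.ncard_eq_toFinset_card F hFf]; exact hcard)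
    calc E = ↑hEf.toFinset := (Set.Finite.coe_toFinset _).symm
    _ = ↑hFf.toFinset := by rw [this]
    _ = F := Set.Finite.coe_toFinset _
  have hxC₁ := hC₁.top_mem
  have hxC₂ := hC₂.top_mem
  have hxD₁ := hD₁.bot_mem
  have hxD₂ := hD₂.bot_mem
  -- key distinctness: cards of glueings with distinct C's differ
  have hdistinct : ∀ (C C' : Set (Set.Iic x)) (D D' : Set (Set.Ici x)),
      IsMaxChain (· ≤ ·) C → IsMaxChain (· ≤ ·) C' → IsMaxChain (· ≤ ·) D →
      IsMaxChain (· ≤ ·) D' → C ≠ C' →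
      (glueSet C D).ncard ≠ (glueSet C' D').ncard := by
    intro C C' D D' hC hC' hD hD' hne hcard
    have hEq := hinj _ _ (glue_isMaxChain hC hD) (glue_isMaxChain hC' hD') hcard
    apply hne
    ext z
    rw [mem_glue_left hD.bot_mem hC.top_mem, hEq, ← mem_glue_left hD'.bot_mem hC'.top_mem]
  have hmemS : ∀ (C : Set (Set.Iic x)) (D : Set (Set.Ici x)),
      IsMaxChain (· ≤ ·) C → IsMaxChain (· ≤ ·) D → (glueSet C D).ncard ∈ S := by
    intro C D hC hD
    exact hS ▸ glue_ncard_mem (glue_isMaxChain hC hD)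
  -- cardinalities
  set p₁ := C₁.ncard with hp₁d
  set p₂ := C₂.ncard with hp₂d
  set q₁ := D₁.ncard with hq₁d
  set q₂ := D₂.ncard with hq₂d
  have hp₁ : 1 ≤ p₁ := (Set.ncard_pos (Set.toFinite _)).2 ⟨_, hxC₁⟩
  have hp₂ : 1 ≤ p₂ := (Set.ncard_pos (Set.toFinite _)).2 ⟨_, hxC₂⟩
  have hq₁ : 1 ≤ q₁ := (Set.ncard_pos (Set.toFinite _)).2 ⟨_, hxD₁⟩
  have hq₂ : 1 ≤ q₂ := (Set.ncard_pos (Set.toFinite _)).2 ⟨_, hxD₂⟩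
  have hg : ∀ (C : Set (Set.Iic x)) (D : Set (Set.Ici x)),
      (⊤ : Set.Iic x) ∈ C → (⊥ : Set.Ici x) ∈ D →
      (glueSet C D).ncard = C.ncard + D.ncard - 1 := by
    intro C D hC hD
    have := glue_ncard hC hD
    omega
  have h11 : p₁ + q₁ - 1 ∈ S := hg C₁ D₁ hxC₁ hxD₁ ▸ hmemS C₁ D₁ hC₁ hD₁
  have h12 : p₁ + q₂ - 1 ∈ S := hg C₁ D₂ hxC₁ hxD₂ ▸ hmemS C₁ D₂ hC₁ hD₂
  have h21 : p₂ + q₁ - 1 ∈ S := hg C₂ D₁ hxC₂ hxD₁ ▸ hmemS C₂ D₁ hC₂ hD₁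
  have h22 : p₂ + q₂ - 1 ∈ S := hg C₂ D₂ hxC₂ hxD₂ ▸ hmemS C₂ D₂ hC₂ hD₂
  have hpne : p₁ ≠ p₂ := by
    intro h
    exact hdistinct C₁ C₂ D₁ D₁ hC₁ hC₂ hD₁ hD₁ hCne
      (by rw [hg C₁ D₁ hxC₁ hxD₁, hg C₂ D₁ hxC₂ hxD₁]; omega)
  have hqne : q₁ ≠ q₂ := by
    intro h
    have hsymm : (glueSet C₁ D₁).ncard = (glueSet C₁ D₂).ncard := by
      rw [hg C₁ D₁ hxC₁ hxD₁, hg C₁ D₂ hxC₁ hxD₂]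
      omega
    have hEq := hinj _ _ (glue_isMaxChain hC₁ hD₁) (glue_isMaxChain hC₁ hD₂) hsymm
    apply hDne
    ext z
    rw [mem_glue_right hxC₁ hxD₁, hEq, ← mem_glue_right hxC₁ hxD₂]
  have hcross1 : p₁ + q₂ - 1 ≠ p₂ + q₁ - 1 := by
    intro h
    exact hdistinct C₁ C₂ D₂ D₁ hC₁ hC₂ hD₂ hD₁ hCne
      (by rw [hg C₁ D₂ hxC₁ hxD₂, hg C₂ D₁ hxC₂ hxD₁]; omega)
  have hcross2 : p₁ + q₁ - 1 ≠ p₂ + q₂ - 1 := by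
    intro h
    exact hdistinct C₁ C₂ D₁ D₂ hC₁ hC₂ hD₁ hD₂ hCne
      (by rw [hg C₁ D₁ hxC₁ hxD₁, hg C₂ D₂ hxC₂ hxD₂]; omega)
  -- now derive contradiction from part1
  have main : ∀ p q r s : ℕ, p < q → r < s → 1 ≤ p → 1 ≤ r →
      p + r - 1 ∈ S → p + s - 1 ∈ S → q + r - 1 ∈ S → q + s - 1 ∈ S →
      p + s - 1 ≠ q + r - 1 → False := by
    intro p q r s hpq hrs hp hr hA hB hC hD hne
    exact part1 ⟨p + r - 1, p + s - 1, q + r - 1, q + s - 1, hA, hB, hC, hD,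
      by omega, by omega, by omega, by omega, hne, by omega⟩
  rcases lt_or_gt_of_ne hpne with hp | hp <;> rcases lt_or_gt_of_ne hqne with hq | hq
  · exact main p₁ p₂ q₁ q₂ hp hq hp₁ hq₁ h11 h12 h21 h22 hcross1
  · exact main p₁ p₂ q₂ q₁ hp hq hp₁ hq₂ h12 h11 h22 h21 hcross2
  · exact main p₂ p₁ q₁ q₂ hp hq hp₂ hq₁ h21 h22 h11 h12 (Ne.symm hcross2)
  · exact main p₂ p₁ q₂ q₁ hp hq hp₂ hq₂ h22 h21 h12 h11 (Ne.symm hcross1)
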